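/- Let A be a Hermitian n×n complex matrix with spectral resolution E (E(δ) the orthogonal projection onto the sum of eigenspaces over eigenvalues in δ), let W be an n×r complex matrix with Wᴴ W = I_r, and define the r×r matrix measure Σ(δ) := Wᴴ E(δ) W. Then the column space of W (the range of the linear map x ↦ Wx) is a cyclic subspace for A — i.e. span{ A^k W x : k ∈ ℕ, x ∈ ℂʳ } = ℂⁿ — if and only if Σ is spectrally equivalent to E, i.e. for every eigenvalue λ of A, rank(Wᴴ P_λ W) = dim ker(A − λI), where P_λ is the orthogonal projection onto ker(A − λI). -/

import Mathlib

open MeasureTheory Module Matrix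

/-- The self-adjoint endomorphism of `ℂⁿ` (with the Euclidean inner product)
associated with a matrix `A`. -/
noncomputable def matEnd (n : ℕ) (A : Matrix (Fin n) (Fin n) ℂ) :
    Module.End ℂ (EuclideanSpace ℂ (Fin n)) :=
  Matrix.toEuclideanLin A

/-- The matrix of the orthogonal projection `P_μ` of `ℂⁿ` onto the eigenspace
`ker (A - μ)` of a matrix `A`. -/
noncomputable def eigProj (n : ℕ) (A : Matrix (Fin n) (Fin n) ℂ) (μ : ℂ) :
    Matrix (Fin n) (Fin n) ℂ :=
  Matrix.toEuclideanLin.symm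
    (((matEnd n A).eigenspace μ).subtype ∘ₗ
      (Submodule.orthogonalProjection ((matEnd n A).eigenspace μ)).toLinearMap)

section Aux

variable {E : Type*} [NormedAddCommGroup E] [InnerProductSpace ℂ E] [FiniteDimensional ℂ E]

variable {E : Type*} [NormedAddCommGroup E] [InnerProductSpace ℂ E] [FiniteDimensional ℂ E]

private noncomputable def QP (T : Module.End ℂ E) (μ : ℂ) : Module.End ℂ E :=
  (T.eigenspace μ).subtype ∘ₗ (Submodule.orthogonalProjectionOnto (T.eigenspace μ)).toLinearMap

private lemma QP_apply (T : Module.End ℂ E) (μ : ℂ) (x : E) :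
    QP T μ x = ↑(Submodule.orthogonalProjectionOnto (T.eigenspace μ) x) := rfl

private lemma QP_apply_mem (T : Module.End ℂ E) (μ : ℂ) (x : E) :
    QP T μ x ∈ T.eigenspace μ := Subtype.mem _

private lemma QP_apply_of_mem (T : Module.End ℂ E) {μ : ℂ} {x : E}
    (hx : x ∈ T.eigenspace μ) : QP T μ x = x := by
  rw [QP_apply]; exact Submodule.starProjection_eq_self_iff.mpr hx

private theorem main_aux (T : Module.End ℂ E) (hsym : T.IsSymmetric) (L : Submodule ℂ E) :
    (⨆ k : ℕ, Submodule.map (T ^ k) L) = ⊤ ↔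
    (∀ μ : ℂ, T.HasEigenvalue μ →
      Module.finrank ℂ (Submodule.map (QP T μ) L) = Module.finrank ℂ (T.eigenspace μ)) := by
  classical
  set K := ⨆ k : ℕ, Submodule.map (T ^ k) L with hKdef
  have hLK : L ≤ K := by
    have h0 : Submodule.map (T ^ 0) L = L := by
      rw [pow_zero, Module.End.one_eq_id, Submodule.map_id]
    calc L = Submodule.map (T ^ 0) L := h0.symm
      _ ≤ K := le_iSup (fun k : ℕ => Submodule.map (T ^ k) L) 0
  have hTK : ∀ x ∈ K, T x ∈ K := by
    have hmap : Submodule.map T K ≤ K := by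
      rw [hKdef, Submodule.map_iSup]
      refine iSup_le fun k => ?_
      rw [← Submodule.map_comp]
      have : T ∘ₗ T ^ k = T ^ (k + 1) := by
        rw [pow_succ']; rfl
      rw [this]
      exact le_iSup (fun k : ℕ => Submodule.map (T ^ k) L) (k + 1)
    intro x hx
    exact hmap ⟨x, hx, rfl⟩
  have hKdec : K ≤ ⨆ μ : ℂ, (K ⊓ T.eigenspace μ) := by
    have hsym' : (T.restrict hTK).IsSymmetric := hsym.restrict_invariant hTK
    have htop' : (⨆ μ : ℂ, Module.End.eigenspace (T.restrict hTK) μ) = ⊤ :=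
      Submodule.orthogonal_eq_bot_iff.mp
        hsym'.orthogonalComplement_iSup_eigenspaces_eq_bot
    have hKmap : K = Submodule.map K.subtype ⊤ := by
      rw [Submodule.map_top, Submodule.range_subtype]
    have hmain : Submodule.map K.subtype
        (⨆ μ : ℂ, Module.End.eigenspace (T.restrict hTK) μ) ≤
        ⨆ μ : ℂ, (K ⊓ T.eigenspace μ) := by
      rw [Submodule.map_iSup]
      refine iSup_mono fun μ => ?_
      rintro _ ⟨y, hy, rfl⟩
      have hy' : T.restrict hTK y = μ • y := Module.End.mem_eigenspace_iff.mp hy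
      refine Submodule.mem_inf.mpr ⟨y.2, ?_⟩
      rw [Module.End.mem_eigenspace_iff]
      have := congrArg Subtype.val hy'
      simpa using this
    calc K = Submodule.map K.subtype ⊤ := hKmap
      _ = Submodule.map K.subtype
            (⨆ μ : ℂ, Module.End.eigenspace (T.restrict hTK) μ) := by rw [htop']
      _ ≤ ⨆ μ : ℂ, (K ⊓ T.eigenspace μ) := hmain
  have hQK : ∀ (ν : ℂ), ∀ x ∈ K, QP T ν x ∈ K := by
    intro ν x hx
    have hx' := hKdec hx
    refine Submodule.iSup_induction (motive := fun y => QP T ν y ∈ K)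
      (fun μ : ℂ => K ⊓ T.eigenspace μ) hx' ?_ (by simp) ?_
    · intro μ y hy
      obtain ⟨hyK, hyE⟩ := hy
      by_cases hμν : ν = μ
      · subst hμν
        rw [QP_apply_of_mem T hyE]
        exact hyK
      · have hyO : y ∈ (T.eigenspace ν)ᗮ := by
          rw [Submodule.mem_orthogonal]
          intro u hu
          exact hsym.orthogonalFamily_eigenspaces hμν ⟨u, hu⟩ ⟨y, hyE⟩
        have : QP T ν y = 0 := by
          rw [QP_apply,
            Submodule.orthogonalProjectionOnto_apply_of_mem_orthogonal hyO]
          rfl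
        rw [this]
        exact K.zero_mem
    · intro a b ha hb
      rw [map_add]
      exact K.add_mem ha hb
  have hQT : ∀ (μ : ℂ) (x : E), QP T μ (T x) = μ • QP T μ x := by
    intro μ x
    set p : E := ↑(Submodule.orthogonalProjectionOnto (T.eigenspace μ) x) with hp
    have hpmem : p ∈ T.eigenspace μ := Subtype.mem _
    have hx : x = p + (x - p) := by abel
    have hTp : T p = μ • p := Module.End.mem_eigenspace_iff.mp hpmem
    have hperp : x - p ∈ (T.eigenspace μ)ᗮ :=
      Submodule.sub_starProjection_mem_orthogonal x
    have hTperp : T (x - p) ∈ (T.eigenspace μ)ᗮ := by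
      refine (Submodule.mem_orthogonal _ _).mpr fun u hu => ?_
      have h1 : T u = μ • u := Module.End.mem_eigenspace_iff.mp hu
      have h2 := (hsym u (x - p)).symm
      rw [h1, inner_smul_left] at h2
      rw [h2, (Submodule.mem_orthogonal _ _).mp hperp u hu, mul_zero]
    have hQp : QP T μ p = p := QP_apply_of_mem T hpmem
    have hQperp : QP T μ (T (x - p)) = 0 := by
      rw [QP_apply,
        Submodule.orthogonalProjectionOnto_apply_of_mem_orthogonal hTperp]
      rfl
    calc QP T μ (T x) = QP T μ (T (p + (x - p))) := by rw [← hx]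
      _ = QP T μ (T p) + QP T μ (T (x - p)) := by rw [map_add, map_add]
      _ = QP T μ (μ • p) + 0 := by rw [hTp, hQperp]
      _ = μ • QP T μ p := by rw [_root_.map_smul, add_zero]
      _ = μ • QP T μ x := by rw [hQp, hp, ← QP_apply]
  have hQTk : ∀ (μ : ℂ) (k : ℕ) (x : E),
      QP T μ ((T ^ k) x) = μ ^ k • QP T μ x := by
    intro μ k
    induction k with
    | zero => intro x; simp
    | succ k ih =>
      intro x
      have : (T ^ (k + 1)) x = (T ^ k) (T x) := by
        rw [pow_succ]; rfl
      rw [this, ih (T x), hQT μ x, smul_smul, ← pow_succ]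
  have hamb : (⨆ μ : ℂ, T.eigenspace μ) = ⊤ :=
    Submodule.orthogonal_eq_bot_iff.mp
      hsym.orthogonalComplement_iSup_eigenspaces_eq_bot
  have hmapQle : ∀ μ : ℂ, Submodule.map (QP T μ) L ≤ T.eigenspace μ := by
    rintro μ _ ⟨x, _, rfl⟩
    exact QP_apply_mem T μ x
  constructor
  · intro htop μ _
    have hge : T.eigenspace μ ≤ Submodule.map (QP T μ) L := by
      intro y hy
      have hyK : y ∈ K := by rw [htop]; trivial
      have h0 : QP T μ y = y := QP_apply_of_mem T hy
      rw [← h0]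
      rw [hKdef] at hyK
      refine Submodule.iSup_induction
        (motive := fun z => QP T μ z ∈ Submodule.map (QP T μ) L)
        (fun k : ℕ => Submodule.map (T ^ k) L) hyK ?_ (by simp) ?_
      · rintro k _ ⟨x, hxL, rfl⟩
        rw [hQTk]
        exact Submodule.smul_mem _ _ ⟨x, hxL, rfl⟩
      · intro a b ha hb
        rw [map_add]
        exact Submodule.add_mem _ ha hb
    rw [le_antisymm (hmapQle μ) hge]
  · intro h
    rw [eq_top_iff, ← hamb]
    refine iSup_le fun μ => ?_
    by_cases hμ : T.HasEigenvalue μ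
    · have heq : Submodule.map (QP T μ) L = T.eigenspace μ :=
        Submodule.eq_of_le_of_finrank_eq (hmapQle μ) (h μ hμ)
      rw [← heq]
      rintro _ ⟨x, hxL, rfl⟩
      exact hQK μ x (hLK hxL)
    · have hbot : T.eigenspace μ = ⊥ := not_not.mp hμ
      rw [hbot]
      exact bot_le

end Aux

section MatrixAux

variable (n : ℕ) (A : Matrix (Fin n) (Fin n) ℂ)

lemma toEuclideanLin_eigProj (μ : ℂ) :
    Matrix.toEuclideanLin (eigProj n A μ) = QP (matEnd n A) μ :=
  Matrix.toEuclideanLin.apply_symm_apply _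

lemma toEuclideanLin_mul {m p q : ℕ} (M : Matrix (Fin m) (Fin p) ℂ)
    (N : Matrix (Fin p) (Fin q) ℂ) :
    Matrix.toEuclideanLin (M * N) =
      Matrix.toEuclideanLin M ∘ₗ Matrix.toEuclideanLin N := by
  simp only [Matrix.toEuclideanLin_eq_toLin]
  exact Matrix.toLin_mul _ _ _ M N

lemma QP_symmetric (T : Module.End ℂ (EuclideanSpace ℂ (Fin n))) (μ : ℂ) :
    (QP T μ).IsSymmetric := by
  intro x y
  exact Submodule.starProjection_isSymmetric (K := T.eigenspace μ) x y

lemma eigProj_conjTranspose (μ : ℂ) : (eigProj n A μ)ᴴ = eigProj n A μ := by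
  apply Matrix.toEuclideanLin.injective
  rw [Matrix.toEuclideanLin_conjTranspose_eq_adjoint, toEuclideanLin_eigProj,
    ← LinearMap.star_eq_adjoint]
  exact ((LinearMap.isSymmetric_iff_isSelfAdjoint _).mp (QP_symmetric n (matEnd n A) μ)).star_eq

lemma eigProj_mul_self (μ : ℂ) : eigProj n A μ * eigProj n A μ = eigProj n A μ := by
  apply Matrix.toEuclideanLin.injective
  rw [toEuclideanLin_mul, toEuclideanLin_eigProj]
  refine LinearMap.ext fun x => ?_
  exact QP_apply_of_mem (matEnd n A) (QP_apply_mem (matEnd n A) μ x)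

lemma eigProj_mul_eigProj_mul {r : ℕ} (μ : ℂ) (X : Matrix (Fin n) (Fin r) ℂ) :
    eigProj n A μ * (eigProj n A μ * X) = eigProj n A μ * X := by
  rw [← Matrix.mul_assoc, eigProj_mul_self]

open scoped ComplexOrder in
lemma rank_eq (r : ℕ) (μ : ℂ) (W : Matrix (Fin n) (Fin r) ℂ) :
    (Wᴴ * eigProj n A μ * W).rank =
      Module.finrank ℂ
        (Submodule.map (QP (matEnd n A) μ) (LinearMap.range (Matrix.toEuclideanLin W))) := by
  have h1 : Wᴴ * eigProj n A μ * W = (eigProj n A μ * W)ᴴ * (eigProj n A μ * W) := by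
    simp only [conjTranspose_mul, eigProj_conjTranspose, Matrix.mul_assoc,
      eigProj_mul_eigProj_mul]
  rw [h1, Matrix.rank_conjTranspose_mul_self,
    Matrix.rank_eq_finrank_range_toLin (eigProj n A μ * W)
      (PiLp.basisFun 2 ℂ (Fin n)) (PiLp.basisFun 2 ℂ (Fin r))]
  have h2 : Matrix.toLin (PiLp.basisFun 2 ℂ (Fin r)) (PiLp.basisFun 2 ℂ (Fin n))
      (eigProj n A μ * W) = Matrix.toEuclideanLin (eigProj n A μ * W) := rfl
  rw [h2, toEuclideanLin_mul, toEuclideanLin_eigProj, LinearMap.range_comp]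

end MatrixAux

/-- **Theorem 2(c), finite-dimensional case.**
Let `A` be a Hermitian `n × n` matrix with resolution of identity `E`, let `W` be an
`n × r` matrix with `Wᴴ W = I`, and let `S(δ) = Wᴴ E(δ) W` be the compressed measure.
Then the column space of `W` is a cyclic subspace for `A` if and only if `S` is
spectrally equivalent to `E`, i.e. `rank (Wᴴ P_λ W) = dim ker (A - λ)` for every
eigenvalue `λ` of `A` (`P_λ` the orthogonal projection onto `ker (A - λ)`). -/
theorem stmt_13 (n r : ℕ) (A : Matrix (Fin n) (Fin n) ℂ) (hA : A.IsHermitian)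
    (W : Matrix (Fin n) (Fin r) ℂ) (hW : Wᴴ * W = 1) :
    (⨆ k : ℕ, Submodule.map (matEnd n A ^ k)
        (LinearMap.range (Matrix.toEuclideanLin W))) = ⊤ ↔
    (∀ μ : ℂ, (matEnd n A).HasEigenvalue μ →
      (Wᴴ * eigProj n A μ * W).rank =
        Module.finrank ℂ ((matEnd n A).eigenspace μ)) := by
  have hsym : (matEnd n A).IsSymmetric := Matrix.isHermitian_iff_isSymmetric.mp hA
  rw [main_aux (matEnd n A) hsym (LinearMap.range (Matrix.toEuclideanLin W))]
  refine forall_congr' fun μ => imp_congr_right fun _ => ?_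
  rw [rank_eq]
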